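/- For every m ≥ 1, the number of 321-avoiding involutions of {1,…,2m} equals twice the number of 321-avoiding involutions of {1,…,2m−1}, i.e. |I(321)_{2m}| = 2·|I(321)_{2m−1}|. -/

import Mathlib

/-- A permutation of `Fin n` avoids the pattern 321 if there are no indices
`i < j < k` with `π i > π j > π k`. -/
def Avoids321 {n : ℕ} (π : Equiv.Perm (Fin n)) : Prop :=
  ¬ ∃ i j k : Fin n, i < j ∧ j < k ∧ π k < π j ∧ π j < π i

/-- A permutation is an involution if it is its own inverse pointwise. -/
def IsInvolution {n : ℕ} (π : Equiv.Perm (Fin n)) : Prop :=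
  ∀ i, π (π i) = i

/-- A finset of `Fin n` consists of consecutive integers iff it is order-convex. -/
def IsConsecutive {n : ℕ} (I : Finset (Fin n)) : Prop :=
  ∀ x ∈ I, ∀ y ∈ I, ∀ z : Fin n, x ≤ z → z ≤ y → z ∈ I

/-- A permutation is simple if every interval (a set of consecutive integers whose
image is also a set of consecutive integers) has cardinality at most 1 or `n`. -/
def IsSimplePerm {n : ℕ} (π : Equiv.Perm (Fin n)) : Prop :=
  ∀ I : Finset (Fin n), IsConsecutive I → IsConsecutive (I.image π) →
    I.card ≤ 1 ∨ I.card = n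

/-- A permutation of `{1,…,n}` (here 0-indexed on `Fin n`) is sum-decomposable
(of type 12) if it maps some proper nonempty initial segment onto itself. -/
def SumDecomposable {n : ℕ} (π : Equiv.Perm (Fin n)) : Prop :=
  ∃ k : ℕ, 1 ≤ k ∧ k < n ∧
    (π : Fin n → Fin n) '' {i : Fin n | (i : ℕ) < k} = {i : Fin n | (i : ℕ) < k}

/-- A permutation is skew-decomposable (of type 21) if it maps some proper nonempty
initial segment onto the corresponding final segment. -/
def SkewDecomposable {n : ℕ} (π : Equiv.Perm (Fin n)) : Prop :=
  ∃ k : ℕ, 1 ≤ k ∧ k < n ∧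
    (π : Fin n → Fin n) '' {i : Fin n | (i : ℕ) < k} = {i : Fin n | n - k ≤ (i : ℕ)}

namespace Av321
open Finset

variable {n : ℕ}

/-- number of elements of `E` with value `< j` -/
def cnt (E : Finset (Fin n)) (j : ℕ) : ℕ := (E.filter (fun i : Fin n => (i : ℕ) < j)).card

/-- height of the lattice path after `j` steps -/
def ht (E : Finset (Fin n)) (j : ℕ) : ℤ := 2 * cnt E j - j

def IsDyck (E : Finset (Fin n)) : Prop := ∀ j ≤ n, 0 ≤ ht E j

lemma cnt_zero (E : Finset (Fin n)) : cnt E 0 = 0 := by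
  simp [cnt]

lemma cnt_succ (E : Finset (Fin n)) (j : ℕ) (hj : j < n) :
    cnt E (j + 1) = cnt E j + (if (⟨j, hj⟩ : Fin n) ∈ E then 1 else 0) := by
  classical
  unfold cnt
  have : E.filter (fun i : Fin n => (i : ℕ) < j + 1)
      = (E.filter (fun i : Fin n => (i : ℕ) < j)) ∪ (E.filter (fun i => i = ⟨j, hj⟩)) := by
    ext x
    simp only [mem_filter, mem_union]
    constructor
    · rintro ⟨hx, hlt⟩
      rcases Nat.lt_succ_iff_lt_or_eq.mp hlt with h | h
      · exact Or.inl ⟨hx, h⟩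
      · exact Or.inr ⟨hx, Fin.ext h⟩
    · rintro (⟨hx, h⟩ | ⟨hx, h⟩)
      · exact ⟨hx, Nat.lt_succ_of_lt h⟩
      · exact ⟨hx, by simp [h]⟩
  rw [this, card_union_of_disjoint]
  · congr 1
    by_cases hm : (⟨j, hj⟩ : Fin n) ∈ E
    · rw [if_pos hm]
      rw [filter_eq']
      simp [hm]
    · rw [if_neg hm]
      rw [filter_eq']
      simp [hm]
  · rw [disjoint_left]
    intro x hx1 hx2
    simp only [mem_filter] at hx1 hx2
    rcases hx2 with ⟨-, rfl⟩
    simp at hx1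

lemma cnt_mono (E : Finset (Fin n)) {a b : ℕ} (h : a ≤ b) : cnt E a ≤ cnt E b := by
  apply card_le_card
  intro x hx
  simp only [mem_filter] at hx ⊢
  exact ⟨hx.1, lt_of_lt_of_le hx.2 h⟩

lemma ht_step_mem (E : Finset (Fin n)) {j : ℕ} (hj : j < n) (h : (⟨j, hj⟩ : Fin n) ∈ E) :
    ht E (j + 1) = ht E j + 1 := by
  unfold ht
  rw [cnt_succ E j hj, if_pos h]
  push_cast
  ring

lemma ht_step_not_mem (E : Finset (Fin n)) {j : ℕ} (hj : j < n) (h : (⟨j, hj⟩ : Fin n) ∉ E) :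
    ht E (j + 1) = ht E j - 1 := by
  unfold ht
  rw [cnt_succ E j hj, if_neg h]
  push_cast
  ring

lemma ht_zero (E : Finset (Fin n)) : ht E 0 = 0 := by simp [ht, cnt_zero]

/-- the discrete "intermediate value" upcrossing lemma -/
lemma exists_upcross (E : Finset (Fin n)) {a b : ℕ} (hab : a ≤ b) (hb : b ≤ n) {v : ℤ}
    (hav : ht E a < v) (hbv : v ≤ ht E b) :
    ∃ u : ℕ, ∃ hu : u < n, a ≤ u ∧ u < b ∧ (⟨u, hu⟩ : Fin n) ∈ E ∧ ht E (u + 1) = v ∧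
      (∀ z, u < z → z ≤ b → v ≤ ht E z) := by
  classical
  set T : Finset ℕ := (Finset.range b).filter (fun y => a ≤ y ∧ ht E y < v) with hT
  have haT : a ∈ T := by
    have hab' : a < b := by
      rcases lt_or_eq_of_le hab with h | h
      · exact h
      · subst h; exact absurd hbv (not_le.mpr hav)
    simp [hT, hab', hav]
  have hTne : T.Nonempty := ⟨a, haT⟩
  set u := T.max' hTne with hu
  have huT : u ∈ T := T.max'_mem hTne
  simp only [hT, mem_filter, Finset.mem_range] at huT
  obtain ⟨hub, hau, huv⟩ := huT
  have hun : u < n := lt_of_lt_of_le hub hb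
  have htail : ∀ z, u < z → z ≤ b → v ≤ ht E z := by
    intro z hz hzb
    rcases lt_or_eq_of_le hzb with h | h
    · by_contra hc
      push_neg at hc
      have : z ∈ T := by simp [hT, h, le_trans hau (le_of_lt hz), hc]
      have := T.le_max' z this
      omega
    · subst h; exact hbv
  have hu1 : v ≤ ht E (u + 1) := htail (u + 1) (Nat.lt_succ_self u) (Nat.succ_le_of_lt hub)
  have hmem : (⟨u, hun⟩ : Fin n) ∈ E := by
    by_contra hc
    rw [ht_step_not_mem E hun hc] at hu1
    omega
  have heq : ht E (u + 1) = v := by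
    rw [ht_step_mem E hun hmem] at hu1 ⊢
    omega
  exact ⟨u, hun, hau, hub, hmem, heq, htail⟩

open scoped Classical in
/-- the set of positions that are "permanent minima from the right": `u ∈ E` such that the
height after step `u` is never exceeded below later. These will be the fixed points. -/
noncomputable def Gset (E : Finset (Fin n)) : Finset (Fin n) :=
  E.filter (fun u => ∀ z ≤ n, (u : ℕ) < z → ht E ((u : ℕ) + 1) ≤ ht E z)

lemma Gset_subset (E : Finset (Fin n)) : Gset E ⊆ E := filter_subset _ _

lemma mem_Gset {E : Finset (Fin n)} {u : Fin n} :
    u ∈ Gset E ↔ u ∈ E ∧ ∀ z ≤ n, (u : ℕ) < z → ht E ((u : ℕ) + 1) ≤ ht E z := by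
  classical
  simp [Gset]

lemma card_G_cut (E : Finset (Fin n)) (hE : IsDyck E) {b : ℕ} (hb : b ≤ n)
    (hcut : ∀ z, b < z → z ≤ n → ht E b ≤ ht E z) :
    (((Gset E).filter (fun g : Fin n => (g : ℕ) < b)).card : ℤ) = ht E b := by
  classical
  set GF := (Gset E).filter (fun g : Fin n => (g : ℕ) < b) with hGF
  have hb0 : 0 ≤ ht E b := hE b hb
  set Φ : Fin n → ℤ := fun g => ht E ((g : ℕ) + 1) with hΦ
  have hup : ∀ g ∈ GF, ∀ z, (g : ℕ) < z → z ≤ n → Φ g ≤ ht E z := by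
    intro g hg z hz hzn
    have := (mem_Gset.mp (mem_filter.mp hg).1).2
    exact this z hzn hz
  have hstep : ∀ g ∈ GF, Φ g = ht E (g : ℕ) + 1 := by
    intro g hg
    have hgE : g ∈ E := Gset_subset E (mem_filter.mp hg).1
    have : (⟨(g : ℕ), g.isLt⟩ : Fin n) = g := by ext; rfl
    rw [hΦ]
    simpa [this] using ht_step_mem E g.isLt (by rwa [this])
  have himg : ∀ g ∈ GF, Φ g ∈ Finset.Icc (1 : ℤ) (ht E b) := by
    intro g hg
    have hgb : (g : ℕ) < b := (mem_filter.mp hg).2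
    have h1 : 1 ≤ Φ g := by
      have := hE (g : ℕ) (le_of_lt (lt_of_lt_of_le g.isLt le_rfl))
      rw [hstep g hg]; omega
    have h2 : Φ g ≤ ht E b := by
      rcases Nat.lt_or_ge ((g : ℕ) + 1) b with h | h
      · exact hup g hg b (by omega) hb
      · have : (g : ℕ) + 1 = b := by omega
        rw [hΦ]; simp [this]
    exact Finset.mem_Icc.mpr ⟨h1, h2⟩
  have hmono : ∀ g ∈ GF, ∀ g' ∈ GF, g < g' → Φ g < Φ g' := by
    intro g hg g' hg' hlt
    have h1 : Φ g ≤ ht E (g' : ℕ) :=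
      hup g hg (g' : ℕ) (by exact_mod_cast hlt) (le_of_lt g'.isLt)
    have := hstep g' hg'
    omega
  have hinj : Set.InjOn Φ GF := by
    intro x hx y hy hxy
    rcases lt_trichotomy x y with h | h | h
    · exact absurd hxy (ne_of_lt (hmono x hx y hy h))
    · exact h
    · exact absurd hxy.symm (ne_of_lt (hmono y hy x hx h))
  have hcard_le : GF.card ≤ (Finset.Icc (1 : ℤ) (ht E b)).card := by
    rw [← Finset.card_image_of_injOn hinj]
    apply card_le_card
    intro v hv
    rcases Finset.mem_image.mp hv with ⟨g, hg, rfl⟩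
    exact himg g hg
  have hcard_ge : (Finset.Icc (1 : ℤ) (ht E b)).card ≤ GF.card := by
    have hsub : Finset.Icc (1 : ℤ) (ht E b) ⊆ GF.image Φ := by
      intro v hv
      rcases Finset.mem_Icc.mp hv with ⟨hv1, hv2⟩
      obtain ⟨u, hun, -, hub, hmem, heq, htail⟩ :=
        exists_upcross E (Nat.zero_le b) hb (by rw [ht_zero]; omega) hv2
      have huG : (⟨u, hun⟩ : Fin n) ∈ GF := by
        rw [hGF, mem_filter, mem_Gset]
        refine ⟨⟨hmem, ?_⟩, hub⟩
        intro z hzn hz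
        simp only at hz ⊢
        rw [heq]
        rcases le_or_gt z b with h | h
        · exact htail z hz h
        · exact le_trans hv2 (hcut z h hzn)
      apply Finset.mem_image.mpr
      exact ⟨⟨u, hun⟩, huG, by simp [hΦ, heq]⟩
    calc (Finset.Icc (1 : ℤ) (ht E b)).card ≤ (GF.image Φ).card := card_le_card hsub
      _ ≤ GF.card := card_image_le
  have : GF.card = (Finset.Icc (1 : ℤ) (ht E b)).card := le_antisymm hcard_le hcard_ge
  rw [this, Int.card_Icc]
  omega

lemma card_G_total (E : Finset (Fin n)) (hE : IsDyck E) :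
    ((Gset E).card : ℤ) = ht E n := by
  classical
  have := card_G_cut E hE (le_refl n) (by intro z h1 h2; omega)
  rw [Finset.filter_true_of_mem (by intro x _; exact x.isLt)] at this
  exact this

lemma ht_KL (E : Finset (Fin n)) (hE : IsDyck E) {g : Fin n} (hg : g ∈ Gset E) :
    (((Gset E).filter (fun x => x ≤ g)).card : ℤ) = ht E ((g : ℕ) + 1) := by
  classical
  have hb : (g : ℕ) + 1 ≤ n := g.isLt
  have hcut : ∀ z, (g : ℕ) + 1 < z → z ≤ n → ht E ((g : ℕ) + 1) ≤ ht E z := by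
    intro z h1 h2
    exact (mem_Gset.mp hg).2 z h2 (by omega)
  have := card_G_cut E hE hb hcut
  rw [← this]
  have heq : (Gset E).filter (fun x => x ≤ g) = (Gset E).filter (fun g1 : Fin n => (g1 : ℕ) < (g : ℕ) + 1) := by
    apply Finset.filter_congr
    intro x _
    simp only [eq_iff_iff, Fin.le_def]
    omega
  rw [heq]

lemma gcount_le_ht (E : Finset (Fin n)) (hE : IsDyck E) (x : Fin n) :
    (((Gset E).filter (fun g => g ≤ x)).card : ℤ) ≤ ht E ((x : ℕ) + 1) := by
  classical
  rcases Finset.eq_empty_or_nonempty ((Gset E).filter (fun g => g ≤ x)) with h | h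
  · rw [h]
    simpa using hE ((x : ℕ) + 1) x.isLt
  · set g0 := Finset.max' _ h with hg0
    have hg0mem : g0 ∈ (Gset E).filter (fun g => g ≤ x) := Finset.max'_mem _ h
    have hg0G : g0 ∈ Gset E := (mem_filter.mp hg0mem).1
    have hg0x : g0 ≤ x := (mem_filter.mp hg0mem).2
    have hfeq : (Gset E).filter (fun g => g ≤ x) = (Gset E).filter (fun g => g ≤ g0) := by
      apply Finset.Subset.antisymm
      · intro y hy
        rw [mem_filter]
        exact ⟨(mem_filter.mp hy).1, Finset.le_max' _ y hy⟩
      · intro y hy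
        rw [mem_filter] at hy ⊢
        exact ⟨hy.1, le_trans hy.2 hg0x⟩
    rw [hfeq, ht_KL E hE hg0G]
    rcases eq_or_lt_of_le hg0x with h | h
    · rw [h]
    · exact (mem_Gset.mp hg0G).2 ((x : ℕ) + 1) x.isLt (by have := Fin.lt_def.mp h; omega)

lemma card_univ_filter_window (a b : ℕ) (hb : b ≤ n) :
    (Finset.univ.filter (fun i : Fin n => a ≤ (i : ℕ) ∧ (i : ℕ) < b)).card = b - a := by
  classical
  have hlt : ∀ m ∈ Finset.Ico a b, m < n := fun m hm =>
    lt_of_lt_of_le (Finset.mem_Ico.mp hm).2 hb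
  have : Finset.univ.filter (fun i : Fin n => a ≤ (i : ℕ) ∧ (i : ℕ) < b)
      = (Finset.Ico a b).attachFin hlt := by
    ext x
    simp [Finset.mem_attachFin, Finset.mem_Ico]
  rw [this, Finset.card_attachFin, Nat.card_Ico]

lemma card_filter_split (E : Finset (Fin n)) (P : Fin n → Prop) [DecidablePred P] :
    (Finset.univ.filter P).card
      = (E.filter P).card + ((Finset.univ \ E).filter P).card := by
  classical
  have h := Finset.card_filter_add_card_filter_not
    (s := Finset.univ.filter P) (p := fun i => i ∈ E)
  have h1 : (Finset.univ.filter P).filter (fun i => i ∈ E) = E.filter P := by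
    ext x; simp [and_comm]
  have h2 : (Finset.univ.filter P).filter (fun i => i ∉ E) = (Finset.univ \ E).filter P := by
    ext x; simp [and_comm]
  rw [h2, h1] at h
  omega

lemma cnt_window (E : Finset (Fin n)) {a b : ℕ} (hab : a ≤ b) :
    cnt E b = cnt E a + (E.filter (fun i : Fin n => a ≤ (i : ℕ) ∧ (i : ℕ) < b)).card := by
  classical
  unfold cnt
  rw [← card_union_of_disjoint]
  · congr 1
    ext x
    simp only [mem_union, mem_filter]
    constructor
    · rintro ⟨hx, h⟩
      by_cases hxa : (x : ℕ) < a
      · exact Or.inl ⟨hx, hxa⟩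
      · exact Or.inr ⟨hx, by omega, h⟩
    · rintro (⟨hx, h⟩ | ⟨hx, h1, h2⟩)
      · exact ⟨hx, by omega⟩
      · exact ⟨hx, h2⟩
  · rw [disjoint_left]
    intro x hx1 hx2
    simp only [mem_filter] at hx1 hx2
    omega

lemma ht_window (E : Finset (Fin n)) {a b : ℕ} (hab : a ≤ b) (hb : b ≤ n) :
    ht E b = ht E a + (E.filter (fun i : Fin n => a ≤ (i : ℕ) ∧ (i : ℕ) < b)).card
      - ((Finset.univ \ E).filter (fun i : Fin n => a ≤ (i : ℕ) ∧ (i : ℕ) < b)).card := by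
  classical
  have h1 := cnt_window E hab
  have h2 := card_filter_split E (fun i : Fin n => a ≤ (i : ℕ) ∧ (i : ℕ) < b)
  have h3 := card_univ_filter_window (n := n) a b hb
  unfold ht
  rw [h1]
  push_cast
  omega

section Perm

variable (π : Equiv.Perm (Fin n))

/-- weak excedance set -/
def wordSet : Finset (Fin n) := Finset.univ.filter (fun i => i ≤ π i)

lemma mem_wordSet {i : Fin n} : i ∈ wordSet π ↔ i ≤ π i := by simp [wordSet]

variable {π}

lemma no321 (ha : ¬ ∃ i j k : Fin n, i < j ∧ j < k ∧ π k < π j ∧ π j < π i)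
    {i j k : Fin n} (h1 : i < j) (h2 : j < k) (h3 : π k < π j) (h4 : π j < π i) : False :=
  ha ⟨i, j, k, h1, h2, h3, h4⟩

lemma incrU (hπ : IsInvolution π)
    (ha : ¬ ∃ i j k : Fin n, i < j ∧ j < k ∧ π k < π j ∧ π j < π i)
    {i j : Fin n} (hij : i < j) (hi : i ≤ π i) (hj : j ≤ π j) : π i < π j := by
  by_contra hc
  push_neg at hc
  have hne : π j ≠ π i := fun h => absurd (π.injective h) (ne_of_gt hij)
  have hlt : π j < π i := lt_of_le_of_ne hc hne
  -- triple (i, j, π i)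
  have hjpi : j < π i := lt_of_le_of_lt hj hlt
  apply no321 ha hij hjpi _ hlt
  rw [hπ i]
  exact lt_of_lt_of_le hij hj

lemma incrD (hπ : IsInvolution π)
    (ha : ¬ ∃ i j k : Fin n, i < j ∧ j < k ∧ π k < π j ∧ π j < π i)
    {i j : Fin n} (hij : i < j) (hi : π i < i) (hj : π j < j) : π i < π j := by
  by_contra hc
  push_neg at hc
  have hne : π j ≠ π i := fun h => absurd (π.injective h) (ne_of_gt hij)
  have hlt : π j < π i := lt_of_le_of_ne hc hne
  -- triple (π j, i, j)
  have h1 : π j < i := lt_trans hlt hi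
  apply no321 ha h1 hij hlt
  rw [hπ j]
  exact lt_trans hi hij

/-- partner of a non-weak-excedance beyond a fixed point stays beyond it -/
lemma partner_beyond (hπ : IsInvolution π)
    (ha : ¬ ∃ i j k : Fin n, i < j ∧ j < k ∧ π k < π j ∧ π j < π i)
    {u i : Fin n} (hu : π u = u) (hui : u < i) (hi : π i < i) : u < π i := by
  rcases lt_trichotomy (π i) u with h | h | h
  · exfalso
    apply no321 ha h hui (by rw [hu]; exact h) (by rw [hπ i, hu]; exact hui)
  · exfalso
    have : i = u := by rw [← hπ i, h, hu]
    rw [this] at hui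
    exact lt_irrefl u hui
  · exact h

end Perm

section Perm2

variable {π : Equiv.Perm (Fin n)}

lemma window_count (hπ : IsInvolution π) (a b : ℕ)
    (hover : ∀ i : Fin n, π i < i → a ≤ (i : ℕ) → (i : ℕ) < b → a ≤ ((π i : Fin n) : ℕ)) :
    ((Finset.univ \ wordSet π).filter (fun i : Fin n => a ≤ (i : ℕ) ∧ (i : ℕ) < b)).card
      ≤ ((wordSet π).filter (fun i : Fin n => a ≤ (i : ℕ) ∧ (i : ℕ) < b)).card := by
  classical
  apply Finset.card_le_card_of_injOn π
  · intro i hi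
    simp only [Finset.mem_coe, mem_filter, Finset.mem_sdiff, mem_wordSet, Finset.mem_univ, true_and] at hi
    obtain ⟨hd, ha1, hb1⟩ := hi
    have hd' : π i < i := lt_of_not_ge hd
    simp only [Finset.mem_coe, mem_filter, mem_wordSet]
    refine ⟨?_, hover i hd' ha1 hb1, ?_⟩
    · rw [hπ i]; exact le_of_lt hd'
    · exact lt_of_lt_of_le (Fin.lt_def.mp hd') (le_of_lt hb1) |>.trans_le (le_refl b) |> fun h => h
  · intro x _ y _ h
    exact π.injective h

lemma wordSet_dyck (hπ : IsInvolution π) : IsDyck (wordSet π) := by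
  intro j hj
  have hw := ht_window (wordSet π) (Nat.zero_le j) hj
  rw [ht_zero] at hw
  have hc := window_count hπ 0 j (by intro i _ _ _; exact Nat.zero_le _)
  omega

lemma fixed_mem_Gset (hπ : IsInvolution π) (ha : Avoids321 π) {u : Fin n} (hu : π u = u) :
    u ∈ Gset (wordSet π) := by
  rw [mem_Gset]
  constructor
  · rw [mem_wordSet, hu]
  · intro z hz huz
    have hw := ht_window (wordSet π) (a := (u : ℕ) + 1) (b := z) (by omega) hz
    have hc := window_count hπ ((u : ℕ) + 1) z (by
      intro i hd h1 h2
      have hui : u < i := by rw [Fin.lt_def]; omega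
      have := partner_beyond hπ ha hu hui hd
      rw [Fin.lt_def] at this
      omega)
    omega

variable (π) in
def fixSet : Finset (Fin n) := Finset.univ.filter (fun i => π i = i)

lemma card_fix (hπ : IsInvolution π) :
    ((fixSet π).card : ℤ) = ht (wordSet π) n := by
  classical
  set E := wordSet π with hE
  have hcnt : cnt E n = E.card := by
    unfold cnt
    congr 1
    apply Finset.filter_true_of_mem
    intro x _
    exact x.isLt
  -- split E into fixed and strict excedances
  set S : Finset (Fin n) := Finset.univ.filter (fun i => i < π i) with hS
  have hsplit : E.card = S.card + (fixSet π).card := by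
    have h := Finset.card_filter_add_card_filter_not
      (s := E) (p := fun i => i < π i)
    have h1 : E.filter (fun i => i < π i) = S := by
      ext x
      simp only [hS, mem_filter, hE, mem_wordSet, Finset.mem_univ, true_and]
      exact ⟨fun h => h.2, fun h => ⟨le_of_lt h, h⟩⟩
    have h2 : E.filter (fun i => ¬ i < π i) = fixSet π := by
      ext x
      simp only [mem_filter, hE, mem_wordSet, fixSet, Finset.mem_univ, true_and, not_lt]
      constructor
      · rintro ⟨h3, h4⟩; exact le_antisymm h4 h3
      · intro h3; rw [h3]; exact ⟨le_refl x, le_refl x⟩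
    rw [h2, h1] at h
    omega
  -- S and the complement of E are in bijection via π
  have hbij : S.card = (Finset.univ \ E).card := by
    apply le_antisymm
    · apply Finset.card_le_card_of_injOn π
      · intro i hi
        simp only [Finset.mem_coe, hS, mem_filter, Finset.mem_univ, true_and] at hi
        simp only [Finset.mem_coe, Finset.mem_sdiff, Finset.mem_univ, true_and, hE, mem_wordSet, not_le]
        rw [hπ i]
        exact hi
      · intro x _ y _ h; exact π.injective h
    · apply Finset.card_le_card_of_injOn π
      · intro i hi
        simp only [Finset.mem_coe, Finset.mem_sdiff, Finset.mem_univ, true_and, hE, mem_wordSet, not_le] at hi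
        simp only [Finset.mem_coe, hS, mem_filter, Finset.mem_univ, true_and]
        rw [hπ i]
        exact hi
      · intro x _ y _ h; exact π.injective h
  have hcompl : E.card + (Finset.univ \ E).card = n := by
    have h := Finset.card_sdiff_add_card_eq_card (Finset.subset_univ E)
    simp only [Finset.card_univ, Fintype.card_fin] at h
    omega
  unfold ht
  rw [hcnt]
  push_cast
  omega

lemma fixSet_eq_Gset (hπ : IsInvolution π) (ha : Avoids321 π) :
    fixSet π = Gset (wordSet π) := by
  classical
  have hsub : fixSet π ⊆ Gset (wordSet π) := by
    intro u hu
    simp only [fixSet, mem_filter, Finset.mem_univ, true_and] at hu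
    exact fixed_mem_Gset hπ ha hu
  apply Finset.eq_of_subset_of_card_le hsub
  have h1 := card_fix hπ
  have h2 := card_G_total (wordSet π) (wordSet_dyck hπ)
  omega

end Perm2

section Construct

variable (E : Finset (Fin n))

def Dset : Finset (Fin n) := Finset.univ \ E

noncomputable def Sset : Finset (Fin n) := E \ Gset E

lemma Sset_subset : Sset E ⊆ E := Finset.sdiff_subset

lemma card_SD (hE : IsDyck E) : (Sset E).card = (Dset E).card := by
  classical
  have hG := card_G_total E hE
  have hGE : (Gset E).card ≤ E.card := Finset.card_le_card (Gset_subset E)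
  have hS : (Sset E).card = E.card - (Gset E).card :=
    Finset.card_sdiff_of_subset (Gset_subset E)
  have hD : (Dset E).card = n - E.card := by
    unfold Dset
    rw [Finset.card_sdiff_of_subset (Finset.subset_univ E)]
    simp
  have hcnt : cnt E n = E.card := by
    unfold cnt
    congr 1
    exact Finset.filter_true_of_mem (fun x _ => x.isLt)
  have hEn : E.card ≤ n := by
    have := Finset.card_le_card (Finset.subset_univ E)
    simpa using this
  unfold ht at hG
  rw [hcnt] at hG
  omega

lemma card_univ_filter_le (x : Fin n) :
    (Finset.univ.filter (fun i : Fin n => i ≤ x)).card = (x : ℕ) + 1 := by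
  classical
  have : Finset.univ.filter (fun i : Fin n => i ≤ x) = Finset.Iic x := by
    ext y; simp
  rw [this, Fin.card_Iic]

lemma cnt_succ_eq_filter_le (x : Fin n) :
    cnt E ((x : ℕ) + 1) = (E.filter (fun i => i ≤ x)).card := by
  unfold cnt
  congr 1
  apply Finset.filter_congr
  intro y _
  simp only [eq_iff_iff, Fin.le_def]
  omega

/-- main count inequality: at every prefix there are at least as many `S`-elements as
`D`-elements. -/
lemma countD_le_countS (hE : IsDyck E) (x : Fin n) :
    ((Dset E).filter (fun i => i ≤ x)).card ≤ ((Sset E).filter (fun i => i ≤ x)).card := by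
  classical
  have hg := gcount_le_ht E hE x
  have h1 : (E.filter (fun i => i ≤ x)).card
      = ((Sset E).filter (fun i => i ≤ x)).card + ((Gset E).filter (fun g => g ≤ x)).card := by
    have h := Finset.card_filter_add_card_filter_not
      (s := E.filter (fun i => i ≤ x)) (p := fun i => i ∈ Gset E)
    have ha : (E.filter (fun i => i ≤ x)).filter (fun i => i ∈ Gset E)
        = (Gset E).filter (fun g => g ≤ x) := by
      ext y
      simp only [mem_filter]
      constructor
      · rintro ⟨⟨h1, h2⟩, h3⟩; exact ⟨h3, h2⟩
      · rintro ⟨h1, h2⟩; exact ⟨⟨Gset_subset E h1, h2⟩, h1⟩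
    have hb : (E.filter (fun i => i ≤ x)).filter (fun i => i ∉ Gset E)
        = (Sset E).filter (fun i => i ≤ x) := by
      ext y
      simp only [mem_filter, Sset, Finset.mem_sdiff]
      tauto
    rw [ha, hb] at h
    omega
  have h2 := card_filter_split E (fun i : Fin n => i ≤ x)
  have h3 := card_univ_filter_le (n := n) x
  have h4 := cnt_succ_eq_filter_le E x
  unfold ht at hg
  rw [h4] at hg
  have : ((Dset E).filter (fun i => i ≤ x)) = ((Finset.univ \ E).filter (fun i : Fin n => i ≤ x)) := rfl
  rw [this]
  omega

end Construct

section OrderEmbCount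

lemma card_filter_le_emb (s : Finset (Fin n)) {k : ℕ} (h : s.card = k) (j : Fin k) :
    (s.filter (fun x => x ≤ s.orderEmbOfFin h j)).card = (j : ℕ) + 1 := by
  classical
  have hrange : ∀ y, y ∈ s ↔ ∃ i, s.orderEmbOfFin h i = y := by
    intro y
    constructor
    · intro hy
      have : y ∈ Set.range (s.orderEmbOfFin h) := by
        rw [Finset.range_orderEmbOfFin s h]; exact hy
      exact this
    · rintro ⟨i, rfl⟩
      exact Finset.orderEmbOfFin_mem s h i
  have : s.filter (fun x => x ≤ s.orderEmbOfFin h j)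
      = (Finset.Iic j).image (s.orderEmbOfFin h) := by
    ext y
    simp only [mem_filter, Finset.mem_image, Finset.mem_Iic]
    constructor
    · rintro ⟨hy, hle⟩
      obtain ⟨i, rfl⟩ := (hrange y).mp hy
      exact ⟨i, (s.orderEmbOfFin h).le_iff_le.mp hle, rfl⟩
    · rintro ⟨i, hij, rfl⟩
      exact ⟨(hrange _).mpr ⟨i, rfl⟩, (s.orderEmbOfFin h).le_iff_le.mpr hij⟩
  rw [this, Finset.card_image_of_injective _ (s.orderEmbOfFin h).injective, Fin.card_Iic]

lemma emb_le_of_count (s : Finset (Fin n)) {k : ℕ} (h : s.card = k) (j : Fin k) (x : Fin n)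
    (hc : (j : ℕ) + 1 ≤ (s.filter (fun y => y ≤ x)).card) : s.orderEmbOfFin h j ≤ x := by
  classical
  by_contra hcon
  push_neg at hcon
  have hrange : ∀ y, y ∈ s ↔ ∃ i, s.orderEmbOfFin h i = y := by
    intro y
    constructor
    · intro hy
      have : y ∈ Set.range (s.orderEmbOfFin h) := by
        rw [Finset.range_orderEmbOfFin s h]; exact hy
      exact this
    · rintro ⟨i, rfl⟩
      exact Finset.orderEmbOfFin_mem s h i
  have hsub : s.filter (fun y => y ≤ x) ⊆ (Finset.Iio j).image (s.orderEmbOfFin h) := by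
    intro y hy
    rcases mem_filter.mp hy with ⟨hy1, hy2⟩
    obtain ⟨i, rfl⟩ := (hrange y).mp hy1
    apply Finset.mem_image.mpr
    refine ⟨i, Finset.mem_Iio.mpr ?_, rfl⟩
    exact (s.orderEmbOfFin h).lt_iff_lt.mp (lt_of_le_of_lt hy2 hcon)
  have := Finset.card_le_card hsub
  rw [Finset.card_image_of_injective _ (s.orderEmbOfFin h).injective, Fin.card_Iio] at this
  omega

end OrderEmbCount

section Psi

variable (E : Finset (Fin n)) (hE : IsDyck E)

noncomputable def eS (hE : IsDyck E) : Fin (Dset E).card ↪o Fin n :=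
  (Sset E).orderEmbOfFin (card_SD E hE)

noncomputable def eD : Fin (Dset E).card ↪o Fin n :=
  (Dset E).orderEmbOfFin rfl

lemma eS_mem (i) : eS E hE i ∈ Sset E := Finset.orderEmbOfFin_mem _ _ i
lemma eD_mem (i) : eD E i ∈ Dset E := Finset.orderEmbOfFin_mem _ _ i

lemma eS_surj {x : Fin n} (hx : x ∈ Sset E) : ∃ i, eS E hE i = x := by
  have : x ∈ Set.range (eS E hE) := by
    rw [eS, Finset.range_orderEmbOfFin]; exact hx
  exact this

lemma eD_surj {x : Fin n} (hx : x ∈ Dset E) : ∃ i, eD E i = x := by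
  have : x ∈ Set.range (eD E) := by
    rw [eD, Finset.range_orderEmbOfFin]; exact hx
  exact this

lemma SD_disjoint {x : Fin n} (hxS : x ∈ Sset E) (hxD : x ∈ Dset E) : False := by
  have h1 := Sset_subset E hxS
  have h2 := (Finset.mem_sdiff.mp hxD).2
  exact h2 h1

open scoped Classical in
noncomputable def psi : Fin n → Fin n := fun x =>
  if hx : x ∈ Sset E then eD E ((((Sset E).orderIsoOfFin (card_SD E hE))).symm ⟨x, hx⟩)
  else if hx : x ∈ Dset E then eS E hE (((Dset E).orderIsoOfFin rfl).symm ⟨x, hx⟩)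
  else x

lemma psi_eval_S (i) : psi E hE (eS E hE i) = eD E i := by
  classical
  have hx : eS E hE i ∈ Sset E := eS_mem E hE i
  rw [psi, dif_pos hx]
  congr 1
  have : (⟨eS E hE i, hx⟩ : {x // x ∈ Sset E}) = (Sset E).orderIsoOfFin (card_SD E hE) i := by
    apply Subtype.ext
    rw [Finset.coe_orderIsoOfFin_apply]
    rfl
  rw [this, OrderIso.symm_apply_apply]

lemma psi_eval_D (i) : psi E hE (eD E i) = eS E hE i := by
  classical
  have hx : eD E i ∈ Dset E := eD_mem E i
  have hnS : eD E i ∉ Sset E := fun h => SD_disjoint E h hx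
  rw [psi, dif_neg hnS, dif_pos hx]
  congr 1
  have : (⟨eD E i, hx⟩ : {x // x ∈ Dset E}) = (Dset E).orderIsoOfFin rfl i := by
    apply Subtype.ext
    rw [Finset.coe_orderIsoOfFin_apply]
    rfl
  rw [this, OrderIso.symm_apply_apply]

lemma psi_eval_G {x : Fin n} (hx : x ∈ Gset E) : psi E hE x = x := by
  classical
  have h1 : x ∉ Sset E := fun h => (Finset.mem_sdiff.mp h).2 hx
  have h2 : x ∉ Dset E := fun h => (Finset.mem_sdiff.mp h).2 (Gset_subset E hx)
  rw [psi, dif_neg h1, dif_neg h2]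

lemma psi_invol : Function.Involutive (psi E hE) := by
  classical
  intro x
  by_cases hxS : x ∈ Sset E
  · obtain ⟨i, rfl⟩ := eS_surj E hE hxS
    rw [psi_eval_S, psi_eval_D]
  · by_cases hxD : x ∈ Dset E
    · obtain ⟨i, rfl⟩ := eD_surj E hxD
      rw [psi_eval_D, psi_eval_S]
    · have hg : x ∈ Gset E := by
        by_cases hxE : x ∈ E
        · by_contra hc
          exact hxS (Finset.mem_sdiff.mpr ⟨hxE, hc⟩)
        · exact absurd (Finset.mem_sdiff.mpr ⟨Finset.mem_univ x, hxE⟩) hxD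
      rw [psi_eval_G E hE hg, psi_eval_G E hE hg]

noncomputable def psiPerm : Equiv.Perm (Fin n) :=
  Function.Involutive.toPerm _ (psi_invol E hE)

lemma psiPerm_apply (x) : psiPerm E hE x = psi E hE x := rfl

lemma psiPerm_invol : IsInvolution (psiPerm E hE) := fun x => psi_invol E hE x

/-- key order fact : `eS i < eD i` -/
lemma eS_lt_eD (i) : eS E hE i < eD E i := by
  have hd : ((Dset E).filter (fun x => x ≤ eD E i)).card = (i : ℕ) + 1 :=
    card_filter_le_emb (Dset E) rfl i
  have hs := countD_le_countS E hE (eD E i)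
  rw [hd] at hs
  have hle : eS E hE i ≤ eD E i := emb_le_of_count (Sset E) (card_SD E hE) i (eD E i) hs
  rcases eq_or_lt_of_le hle with h | h
  · exfalso
    exact SD_disjoint E (h ▸ eS_mem E hE i) (eD_mem E i)
  · exact h

/-- the key claim: an `S`-element below a `G`-element has its partner below it too -/
lemma eD_lt_of_lt_G {i} {g : Fin n} (hg : g ∈ Gset E) (hlt : eS E hE i < g) :
    eD E i < g := by
  classical
  by_contra hc
  push_neg at hc
  have hne : g ≠ eD E i := by
    intro h
    exact (Finset.mem_sdiff.mp (h ▸ eD_mem E i)).2 (Gset_subset E hg)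
  have hglt : g < eD E i := lt_of_le_of_ne hc hne
  -- counts at `≤ g`
  have hdcount : ((Dset E).filter (fun y => y ≤ g)).card ≤ (i : ℕ) := by
    by_contra hdc
    push_neg at hdc
    have := emb_le_of_count (Dset E) rfl i g hdc
    exact absurd hglt (not_lt.mpr this)
  have hscount : (i : ℕ) + 1 ≤ ((Sset E).filter (fun y => y ≤ g)).card := by
    have h1 : ((Sset E).filter (fun x => x ≤ eS E hE i)).card = (i : ℕ) + 1 :=
      card_filter_le_emb (Sset E) (card_SD E hE) i
    have hsub : (Sset E).filter (fun x => x ≤ eS E hE i) ⊆ (Sset E).filter (fun y => y ≤ g) := by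
      intro y hy
      rcases Finset.mem_filter.mp hy with ⟨hy1, hy2⟩
      exact Finset.mem_filter.mpr ⟨hy1, le_trans hy2 (le_of_lt hlt)⟩
    have := Finset.card_le_card hsub
    omega
  -- height identity at g+1 and KL
  have hKL := ht_KL E hE hg
  have h1 : (E.filter (fun i => i ≤ g)).card
      = ((Sset E).filter (fun i => i ≤ g)).card + ((Gset E).filter (fun x => x ≤ g)).card := by
    have h := Finset.card_filter_add_card_filter_not
      (s := E.filter (fun i => i ≤ g)) (p := fun i => i ∈ Gset E)
    have ha : (E.filter (fun i => i ≤ g)).filter (fun i => i ∈ Gset E)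
        = (Gset E).filter (fun x => x ≤ g) := by
      ext y
      simp only [mem_filter]
      constructor
      · rintro ⟨⟨h1, h2⟩, h3⟩; exact ⟨h3, h2⟩
      · rintro ⟨h1, h2⟩; exact ⟨⟨Gset_subset E h1, h2⟩, h1⟩
    have hb : (E.filter (fun i => i ≤ g)).filter (fun i => i ∉ Gset E)
        = (Sset E).filter (fun i => i ≤ g) := by
      ext y
      simp only [mem_filter, Sset, Finset.mem_sdiff]
      tauto
    rw [ha, hb] at h
    omega
  have h2 := card_filter_split E (fun i : Fin n => i ≤ g)
  have h3 := card_univ_filter_le (n := n) g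
  have h4 := cnt_succ_eq_filter_le E g
  have h5 : ((Dset E).filter (fun i => i ≤ g)) = ((Finset.univ \ E).filter (fun i : Fin n => i ≤ g)) := rfl
  unfold ht at hKL
  rw [h4] at hKL
  rw [h5] at hdcount
  omega

end Psi

section Psi2

variable (E : Finset (Fin n)) (hE : IsDyck E)

lemma cases_SDG (x : Fin n) : x ∈ Sset E ∨ x ∈ Dset E ∨ x ∈ Gset E := by
  classical
  by_cases hxE : x ∈ E
  · by_cases hxG : x ∈ Gset E
    · exact Or.inr (Or.inr hxG)
    · exact Or.inl (Finset.mem_sdiff.mpr ⟨hxE, hxG⟩)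
  · exact Or.inr (Or.inl (Finset.mem_sdiff.mpr ⟨Finset.mem_univ x, hxE⟩))

lemma wordSet_psi : wordSet (psiPerm E hE) = E := by
  ext x
  rw [mem_wordSet, psiPerm_apply]
  rcases cases_SDG E x with hx | hx | hx
  · obtain ⟨i, rfl⟩ := eS_surj E hE hx
    rw [psi_eval_S]
    constructor
    · intro _; exact Sset_subset E hx
    · intro _; exact le_of_lt (eS_lt_eD E hE i)
  · obtain ⟨i, rfl⟩ := eD_surj E hx
    rw [psi_eval_D]
    constructor
    · intro h; exact absurd h (not_le.mpr (eS_lt_eD E hE i))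
    · intro h; exact absurd h (Finset.mem_sdiff.mp hx).2
  · rw [psi_eval_G E hE hx]
    exact ⟨fun _ => Gset_subset E hx, fun _ => le_refl x⟩

lemma psi_incrE {x y : Fin n} (hxy : x < y) (hx : x ∈ E) (hy : y ∈ E) :
    psi E hE x < psi E hE y := by
  classical
  have hcx : x ∈ Sset E ∨ x ∈ Gset E := by
    rcases cases_SDG E x with h | h | h
    · exact Or.inl h
    · exact absurd hx (Finset.mem_sdiff.mp h).2
    · exact Or.inr h
  have hcy : y ∈ Sset E ∨ y ∈ Gset E := by
    rcases cases_SDG E y with h | h | h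
    · exact Or.inl h
    · exact absurd hy (Finset.mem_sdiff.mp h).2
    · exact Or.inr h
  rcases hcx with hxS | hxG
  · obtain ⟨i, rfl⟩ := eS_surj E hE hxS
    rw [psi_eval_S]
    rcases hcy with hyS | hyG
    · obtain ⟨j, rfl⟩ := eS_surj E hE hyS
      rw [psi_eval_S]
      exact (eD E).lt_iff_lt.mpr ((eS E hE).lt_iff_lt.mp hxy)
    · rw [psi_eval_G E hE hyG]
      exact eD_lt_of_lt_G E hE hyG hxy
  · rw [psi_eval_G E hE hxG]
    rcases hcy with hyS | hyG
    · obtain ⟨j, rfl⟩ := eS_surj E hE hyS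
      rw [psi_eval_S]
      exact lt_trans hxy (eS_lt_eD E hE j)
    · rw [psi_eval_G E hE hyG]
      exact hxy

lemma psi_incrD {x y : Fin n} (hxy : x < y) (hx : x ∈ Dset E) (hy : y ∈ Dset E) :
    psi E hE x < psi E hE y := by
  obtain ⟨i, rfl⟩ := eD_surj E hx
  obtain ⟨j, rfl⟩ := eD_surj E hy
  rw [psi_eval_D, psi_eval_D]
  exact (eS E hE).lt_iff_lt.mpr ((eD E).lt_iff_lt.mp hxy)

lemma psi_avoids : Avoids321 (psiPerm E hE) := by
  classical
  rintro ⟨i, j, k, h1, h2, h3, h4⟩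
  have dmem : ∀ x : Fin n, x ∉ E → x ∈ Dset E := fun x hx =>
    Finset.mem_sdiff.mpr ⟨Finset.mem_univ x, hx⟩
  by_cases hi : i ∈ E <;> by_cases hj : j ∈ E <;> by_cases hk : k ∈ E
  · exact absurd (psi_incrE E hE h1 hi hj) (not_lt.mpr (le_of_lt h4))
  · exact absurd (psi_incrE E hE h1 hi hj) (not_lt.mpr (le_of_lt h4))
  · exact absurd (psi_incrE E hE (lt_trans h1 h2) hi hk)
      (not_lt.mpr (le_of_lt (lt_trans h3 h4)))
  · exact absurd (psi_incrD E hE h2 (dmem j hj) (dmem k hk)) (not_lt.mpr (le_of_lt h3))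
  · exact absurd (psi_incrE E hE h2 hj hk) (not_lt.mpr (le_of_lt h3))
  · exact absurd (psi_incrD E hE (lt_trans h1 h2) (dmem i hi) (dmem k hk))
      (not_lt.mpr (le_of_lt (lt_trans h3 h4)))
  · exact absurd (psi_incrD E hE h1 (dmem i hi) (dmem j hj)) (not_lt.mpr (le_of_lt h4))
  · exact absurd (psi_incrD E hE h1 (dmem i hi) (dmem j hj)) (not_lt.mpr (le_of_lt h4))

end Psi2

section Uniqueness

variable {π : Equiv.Perm (Fin n)}

lemma psi_wordSet_eq (hπ : IsInvolution π) (ha : Avoids321 π) :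
    psiPerm (wordSet π) (wordSet_dyck hπ) = π := by
  classical
  set E := wordSet π with hEdef
  have hE : IsDyck E := wordSet_dyck hπ
  have hfix : fixSet π = Gset E := fixSet_eq_Gset hπ ha
  -- π composed with eD is a strictly monotone enumeration of Sset E
  have hmem : ∀ j, π (eD E j) ∈ Sset E := by
    intro j
    have hd : eD E j ∈ Dset E := eD_mem E j
    have hd2 : π (eD E j) < eD E j :=
      lt_of_not_ge (fun hc => (Finset.mem_sdiff.mp hd).2 ((mem_wordSet π).mpr hc))
    rw [Sset, ← hfix]
    apply Finset.mem_sdiff.mpr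
    constructor
    · exact (mem_wordSet π).mpr (by rw [hπ]; exact le_of_lt hd2)
    · simp only [fixSet, mem_filter, Finset.mem_univ, true_and, not_and]
      intro hcon
      have : π (π (eD E j)) = π (eD E j) := by rw [hcon]
      rw [hπ] at this
      exact absurd this.symm (ne_of_lt hd2)
  have hmono : StrictMono (fun j => π (eD E j)) := by
    intro a b hab
    have h1 : eD E a < eD E b := (eD E).lt_iff_lt.mpr hab
    have hda : π (eD E a) < eD E a :=
      lt_of_not_ge (fun hc => (Finset.mem_sdiff.mp (eD_mem E a)).2 ((mem_wordSet π).mpr hc))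
    have hdb : π (eD E b) < eD E b :=
      lt_of_not_ge (fun hc => (Finset.mem_sdiff.mp (eD_mem E b)).2 ((mem_wordSet π).mpr hc))
    exact incrD hπ ha h1 hda hdb
  have huniq := Finset.orderEmbOfFin_unique (card_SD E hE) hmem hmono
  have hfeq : ∀ j, π (eD E j) = eS E hE j := fun j => congrFun huniq j
  apply Equiv.ext
  intro x
  rw [psiPerm_apply]
  rcases cases_SDG E x with hx | hx | hx
  · obtain ⟨i, rfl⟩ := eS_surj E hE hx
    rw [psi_eval_S, ← hfeq, hπ]
  · obtain ⟨i, rfl⟩ := eD_surj E hx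
    rw [psi_eval_D, ← hfeq]
  · rw [psi_eval_G E hE hx]
    have : x ∈ fixSet π := hfix ▸ hx
    simp only [fixSet, mem_filter] at this
    exact this.2.symm

end Uniqueness

noncomputable def mainEquiv (n : ℕ) :
    {π : Equiv.Perm (Fin n) // IsInvolution π ∧ Avoids321 π} ≃ {E : Finset (Fin n) // IsDyck E} where
  toFun p := ⟨wordSet p.1, wordSet_dyck p.2.1⟩
  invFun q := ⟨psiPerm q.1 q.2, psiPerm_invol q.1 q.2, psi_avoids q.1 q.2⟩
  left_inv p := Subtype.ext (psi_wordSet_eq p.2.1 p.2.2)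
  right_inv q := Subtype.ext (wordSet_psi q.1 q.2)

section Counting

variable {n : ℕ}

open scoped Classical in
noncomputable def up (E' : Finset (Fin n)) (b : Bool) : Finset (Fin (n + 1)) :=
  Finset.univ.filter (fun j : Fin (n + 1) =>
    if h : (j : ℕ) < n then (⟨(j : ℕ), h⟩ : Fin n) ∈ E' else b = true)

open scoped Classical in
noncomputable def down (E : Finset (Fin (n + 1))) : Finset (Fin n) :=
  Finset.univ.filter (fun i : Fin n => (Fin.castSucc i) ∈ E)

lemma mem_up_lt {E' : Finset (Fin n)} {b : Bool} {x : Fin (n + 1)} (h : (x : ℕ) < n) :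
    x ∈ up E' b ↔ (⟨(x : ℕ), h⟩ : Fin n) ∈ E' := by
  classical
  simp only [up, mem_filter, Finset.mem_univ, true_and, dif_pos h]

lemma mem_up_last {E' : Finset (Fin n)} {b : Bool} {x : Fin (n + 1)} (h : ¬ (x : ℕ) < n) :
    x ∈ up E' b ↔ b = true := by
  classical
  simp only [up, mem_filter, Finset.mem_univ, true_and, dif_neg h]

lemma mem_down {E : Finset (Fin (n + 1))} {i : Fin n} :
    i ∈ down E ↔ Fin.castSucc i ∈ E := by
  classical
  simp [down]

def castEmb : Fin n ↪ Fin (n + 1) := ⟨Fin.castSucc, Fin.castSucc_injective n⟩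

lemma castEmb_val (i : Fin n) : ((castEmb i : Fin (n + 1)) : ℕ) = (i : ℕ) := by
  simp [castEmb]

lemma cnt_up (E' : Finset (Fin n)) (b : Bool) {j : ℕ} (hj : j ≤ n) :
    cnt (up E' b) j = cnt E' j := by
  classical
  unfold cnt
  have hset : (up E' b).filter (fun x : Fin (n + 1) => (x : ℕ) < j)
      = (E'.filter (fun i : Fin n => (i : ℕ) < j)).map castEmb := by
    ext x
    simp only [mem_filter, Finset.mem_map]
    constructor
    · rintro ⟨hxu, hxj⟩
      have hxn : (x : ℕ) < n := lt_of_lt_of_le hxj hj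
      refine ⟨Fin.castLT x hxn, ⟨?_, hxj⟩, ?_⟩
      · exact (mem_up_lt hxn).mp hxu
      · apply Fin.ext
        simp [castEmb]
    · rintro ⟨i, ⟨hiE, hij⟩, rfl⟩
      have hval := castEmb_val i
      have hxn : ((castEmb i : Fin (n + 1)) : ℕ) < n := by
        rw [hval]; exact i.isLt
      constructor
      · rw [mem_up_lt hxn]
        have : (⟨((castEmb i : Fin (n + 1)) : ℕ), hxn⟩ : Fin n) = i := by
          apply Fin.ext; simp [hval]
        rw [this]
        exact hiE
      · rw [hval]; exact hij
  rw [hset, Finset.card_map]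

lemma cnt_down (E : Finset (Fin (n + 1))) {j : ℕ} (hj : j ≤ n) :
    cnt (down E) j = cnt E j := by
  classical
  unfold cnt
  have hset : E.filter (fun x : Fin (n + 1) => (x : ℕ) < j)
      = ((down E).filter (fun i : Fin n => (i : ℕ) < j)).map castEmb := by
    ext x
    simp only [mem_filter, Finset.mem_map]
    constructor
    · rintro ⟨hxE, hxj⟩
      have hxn : (x : ℕ) < n := lt_of_lt_of_le hxj hj
      refine ⟨Fin.castLT x hxn, ⟨?_, hxj⟩, ?_⟩
      · rw [mem_down]
        have : Fin.castSucc (Fin.castLT x hxn) = x := by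
          apply Fin.ext; simp
        rw [this]
        exact hxE
      · apply Fin.ext
        simp [castEmb]
    · rintro ⟨i, ⟨hiD, hij⟩, rfl⟩
      refine ⟨?_, ?_⟩
      · have := mem_down.mp hiD
        simpa [castEmb] using this
      · simpa [castEmb] using hij
  rw [hset, Finset.card_map]

lemma isDyck_down {E : Finset (Fin (n + 1))} (hE : IsDyck E) : IsDyck (down E) := by
  intro j hj
  have := hE j (by omega)
  unfold ht at this ⊢
  rw [cnt_down E hj]
  exact this

lemma cnt_up_top (E' : Finset (Fin n)) (b : Bool) :
    cnt (up E' b) (n + 1) = cnt E' n + (if b then 1 else 0) := by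
  classical
  rw [cnt_succ (up E' b) n (by omega), cnt_up E' b (le_refl n)]
  congr 1
  have hmem := mem_up_last (E' := E') (b := b) (x := (⟨n, by omega⟩ : Fin (n + 1))) (by simp)
  by_cases hb : b = true
  · rw [if_pos (hmem.mpr hb)]
    simp [hb]
  · rw [if_neg (fun h => hb (hmem.mp h))]
    simp [hb]

lemma isDyck_up {E' : Finset (Fin n)} (hodd : n % 2 = 1) (hE' : IsDyck E') (b : Bool) :
    IsDyck (up E' b) := by
  intro j hj
  rcases Nat.lt_or_ge j (n + 1) with h | h
  · have hjn : j ≤ n := by omega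
    have := hE' j hjn
    unfold ht at this ⊢
    rw [cnt_up E' b hjn]
    exact this
  · have hj1 : j = n + 1 := by omega
    subst hj1
    have h0 := hE' n (le_refl n)
    unfold ht at h0 ⊢
    rw [cnt_up_top E' b]
    have hcn : n + 1 ≤ 2 * cnt E' n := by omega
    by_cases hb : b = true
    · simp only [hb, if_true]
      push_cast
      omega
    · simp only [hb, if_false]
      push_cast
      omega

open scoped Classical in
noncomputable def dyckEquiv (hodd : n % 2 = 1) :
    {E : Finset (Fin (n + 1)) // IsDyck E} ≃ {E' : Finset (Fin n) // IsDyck E'} × Bool where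
  toFun E := (⟨down E.1, isDyck_down E.2⟩, decide ((⟨n, by omega⟩ : Fin (n + 1)) ∈ E.1))
  invFun p := ⟨up p.1.1 p.2, isDyck_up hodd p.1.2 p.2⟩
  left_inv := by
    rintro ⟨E, hE⟩
    apply Subtype.ext
    simp only
    ext x
    rcases Nat.lt_or_ge (x : ℕ) n with h | h
    · rw [mem_up_lt h, mem_down]
      have : Fin.castSucc (⟨(x : ℕ), h⟩ : Fin n) = x := by
        apply Fin.ext; simp
      rw [this]
    · rw [mem_up_last (by omega)]
      have hx : x = (⟨n, by omega⟩ : Fin (n + 1)) := by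
        apply Fin.ext
        have := x.isLt
        simp only
        omega
      rw [hx]
      simp
  right_inv := by
    rintro ⟨⟨E', hE'⟩, b⟩
    simp only [Prod.mk.injEq]
    constructor
    · apply Subtype.ext
      simp only
      ext i
      rw [mem_down]
      have hxn : ((Fin.castSucc i : Fin (n + 1)) : ℕ) < n := by simp
      rw [mem_up_lt hxn]
      have : (⟨((Fin.castSucc i : Fin (n + 1)) : ℕ), hxn⟩ : Fin n) = i := by
        apply Fin.ext; simp
      rw [this]
    · have hmem := mem_up_last (E' := E') (b := b) (x := (⟨n, by omega⟩ : Fin (n + 1))) (by simp)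
      cases b
      · simp only [decide_eq_false_iff_not]
        intro h
        exact absurd (hmem.mp h) (by simp)
      · simp only [decide_eq_true_eq]
        exact hmem.mpr rfl

end Counting

end Av321

/-- |I(321)_{2m}| = 2 |I(321)_{2m-1}| for every m ≥ 1. -/
theorem card_even_eq_two_mul_card_odd (m : ℕ) (hm : 1 ≤ m) :
    Nat.card {π : Equiv.Perm (Fin (2 * m)) // IsInvolution π ∧ Avoids321 π} =
      2 * Nat.card {π : Equiv.Perm (Fin (2 * m - 1)) // IsInvolution π ∧ Avoids321 π} := by
  obtain ⟨k, rfl⟩ : ∃ k, m = k + 1 := ⟨m - 1, by omega⟩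
  have h1 : 2 * (k + 1) = (2 * k + 1) + 1 := by ring
  have h2 : 2 * (k + 1) - 1 = 2 * k + 1 := by omega
  rw [h2, h1]
  have hodd : (2 * k + 1) % 2 = 1 := by omega
  have hbool : Nat.card Bool = 2 := by simp [Nat.card_eq_fintype_card]
  calc Nat.card {π : Equiv.Perm (Fin ((2 * k + 1) + 1)) // IsInvolution π ∧ Avoids321 π}
      = Nat.card {E : Finset (Fin ((2 * k + 1) + 1)) // Av321.IsDyck E} :=
        Nat.card_congr (Av321.mainEquiv _)
    _ = Nat.card ({E : Finset (Fin (2 * k + 1)) // Av321.IsDyck E} × Bool) :=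
        Nat.card_congr (Av321.dyckEquiv hodd)
    _ = Nat.card {E : Finset (Fin (2 * k + 1)) // Av321.IsDyck E} * Nat.card Bool :=
        Nat.card_prod _ _
    _ = Nat.card {π : Equiv.Perm (Fin (2 * k + 1)) // IsInvolution π ∧ Avoids321 π} * 2 := by
        rw [hbool, (Nat.card_congr (Av321.mainEquiv (2 * k + 1))).symm]
    _ = 2 * Nat.card {π : Equiv.Perm (Fin (2 * k + 1)) // IsInvolution π ∧ Avoids321 π} := by
        ring
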